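/- arXiv:0803.4252 — 3 statements merged into one kernel-verified Lean document; each statement's English description precedes it below -/
import Mathlib

section
/- Let (X, d) be a compact metric space and n ≥ 1. Then the function d̂_n : I(X) × I(X) → ℝ is continuous, where I(X) carries the weak* topology. Equivalently, if a sequence (μ_i) in I(X) converges to μ in the weak* topology and ν_i → ν in the weak* topology, then d̂_n(μ_i, ν_i) → d̂_n(μ, ν); in particular there is no sequence μ_i → μ with d̂_n(μ_i, μ) bounded away from 0. -/
/-- An idempotent (Maslov) probability measure on a topological space `X` is a functional
`μ : C(X, ℝ) → ℝ` that is normalized on constants, shifts under addition of constants, and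
turns pointwise maxima into maxima. -/
def IsIdemMeasure {X : Type*} [TopologicalSpace X] (μ : C(X, ℝ) → ℝ) : Prop :=
  (∀ c : ℝ, μ (ContinuousMap.const X c) = c) ∧
  (∀ (c : ℝ) (φ : C(X, ℝ)), μ (ContinuousMap.const X c + φ) = c + μ φ) ∧
  (∀ φ ψ : C(X, ℝ), μ (φ ⊔ ψ) = max (μ φ) (μ ψ))

/-- The space `I(X)` of idempotent probability measures on `X`; as a subtype of the product
`(C(X, ℝ) → ℝ)` it automatically carries the weak* (pointwise convergence) topology. -/
abbrev IdemMeasure (X : Type*) [TopologicalSpace X] :=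
  {μ : C(X, ℝ) → ℝ // IsIdemMeasure μ}

/-- `n-LIP(X, d)`: the continuous functions that are Lipschitz with constant `n`. -/
def nLip (X : Type*) [MetricSpace X] (n : ℕ) : Set C(X, ℝ) :=
  {φ | ∀ x y : X, |φ x - φ y| ≤ (n : ℝ) * dist x y}

/-- The pseudometric `d̂ₙ(μ, ν) = sup { |μ(φ) − ν(φ)| : φ ∈ n-LIP(X, d) }`. -/
noncomputable def dHat {X : Type*} [MetricSpace X] (n : ℕ) (μ ν : C(X, ℝ) → ℝ) : ℝ :=
  sSup {r : ℝ | ∃ φ ∈ nLip X n, r = |μ φ - ν φ|}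

open Filter Topology

set_option linter.unusedSectionVars false
set_option maxHeartbeats 1000000

section Aux

variable {X : Type*} [MetricSpace X] [CompactSpace X]

lemma idem_mono {μ : C(X,ℝ) → ℝ} (h : IsIdemMeasure μ) {φ ψ : C(X,ℝ)} (hle : φ ≤ ψ) :
    μ φ ≤ μ ψ := by
  have h2 := h.2.2 φ ψ
  rw [sup_eq_right.mpr hle] at h2
  rw [h2]; exact le_max_left _ _

lemma idem_zero {μ : C(X,ℝ) → ℝ} (h : IsIdemMeasure μ) : μ 0 = 0 := by
  have := h.1 0
  simpa using this

lemma idem_sub_le {μ : C(X,ℝ) → ℝ} (h : IsIdemMeasure μ) (φ ψ : C(X,ℝ)) :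
    μ φ - μ ψ ≤ ‖φ - ψ‖ := by
  have hle : φ ≤ ContinuousMap.const X ‖φ - ψ‖ + ψ := by
    rw [ContinuousMap.le_def]
    intro x
    have h1 : ‖(φ - ψ) x‖ ≤ ‖φ - ψ‖ := ContinuousMap.norm_coe_le_norm _ x
    simp only [ContinuousMap.sub_apply, Real.norm_eq_abs] at h1
    have := abs_le.mp h1
    simp only [ContinuousMap.add_apply, ContinuousMap.const_apply]
    linarith [this.2]
  have := idem_mono h hle
  rw [h.2.1] at this
  linarith

lemma idem_lip {μ : C(X,ℝ) → ℝ} (h : IsIdemMeasure μ) (φ ψ : C(X,ℝ)) :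
    |μ φ - μ ψ| ≤ ‖φ - ψ‖ := by
  rw [abs_sub_le_iff]
  refine ⟨idem_sub_le h φ ψ, ?_⟩
  rw [← norm_sub_rev]
  exact idem_sub_le h ψ φ

lemma idem_norm_le {μ : C(X,ℝ) → ℝ} (h : IsIdemMeasure μ) (φ : C(X,ℝ)) :
    |μ φ| ≤ ‖φ‖ := by
  have := idem_lip h φ 0
  simpa [idem_zero h] using this

lemma zero_mem_nLip (n : ℕ) : (0 : C(X,ℝ)) ∈ nLip X n := by
  intro x y
  simp [mul_nonneg (Nat.cast_nonneg n) dist_nonneg]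

/-- the normalized Lipschitz functions -/
def Kset (X : Type*) [MetricSpace X] (n : ℕ) (x₀ : X) : Set C(X, ℝ) :=
  {φ | φ ∈ nLip X n ∧ φ x₀ = 0}

lemma zero_mem_Kset (n : ℕ) (x₀ : X) : (0 : C(X,ℝ)) ∈ Kset X n x₀ :=
  ⟨zero_mem_nLip n, by simp⟩

lemma Kset_norm_le {n : ℕ} {x₀ : X} {φ : C(X,ℝ)} (h : φ ∈ Kset X n x₀) :
    ‖φ‖ ≤ (n : ℝ) * Metric.diam (Set.univ : Set X) := by
  have hB : (0:ℝ) ≤ (n : ℝ) * Metric.diam (Set.univ : Set X) :=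
    mul_nonneg (Nat.cast_nonneg n) Metric.diam_nonneg
  rw [ContinuousMap.norm_le _ hB]
  intro x
  rw [Real.norm_eq_abs]
  calc |φ x| = |φ x - φ x₀| := by rw [h.2, sub_zero]
    _ ≤ (n : ℝ) * dist x x₀ := h.1 x x₀
    _ ≤ (n : ℝ) * Metric.diam (Set.univ : Set X) := by
        apply mul_le_mul_of_nonneg_left _ (Nat.cast_nonneg n)
        exact Metric.dist_le_diam_of_mem isCompact_univ.isBounded trivial trivial

/-- shift a Lipschitz function into the normalized set without changing `μ φ - ν φ` -/
lemma shift_to_Kset {μ ν : C(X,ℝ) → ℝ} (hμ : IsIdemMeasure μ) (hν : IsIdemMeasure ν)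
    {n : ℕ} (x₀ : X) {φ : C(X,ℝ)} (hφ : φ ∈ nLip X n) :
    ∃ ψ ∈ Kset X n x₀, μ φ - ν φ = μ ψ - ν ψ := by
  set c := φ x₀ with hc
  refine ⟨φ - ContinuousMap.const X c, ⟨?_, by simp [hc]⟩, ?_⟩
  · intro x y
    simpa using hφ x y
  · have hdecomp : ContinuousMap.const X c + (φ - ContinuousMap.const X c) = φ := by abel
    have h1 := hμ.2.1 c (φ - ContinuousMap.const X c)
    have h2 := hν.2.1 c (φ - ContinuousMap.const X c)
    rw [hdecomp] at h1 h2
    rw [h1, h2]; ring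

lemma dHat_bddAbove {μ ν : C(X,ℝ) → ℝ} (hμ : IsIdemMeasure μ) (hν : IsIdemMeasure ν)
    (n : ℕ) (x₀ : X) :
    BddAbove {r : ℝ | ∃ φ ∈ nLip X n, r = |μ φ - ν φ|} := by
  refine ⟨2 * ((n : ℝ) * Metric.diam (Set.univ : Set X)), ?_⟩
  rintro r ⟨φ, hφ, rfl⟩
  obtain ⟨ψ, hψ, heq⟩ := shift_to_Kset hμ hν x₀ hφ
  rw [heq]
  calc |μ ψ - ν ψ| ≤ |μ ψ| + |ν ψ| := abs_sub _ _
    _ ≤ ‖ψ‖ + ‖ψ‖ := add_le_add (idem_norm_le hμ ψ) (idem_norm_le hν ψ)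
    _ ≤ _ := by have := Kset_norm_le hψ; linarith

lemma dHat_set_nonempty {μ ν : C(X,ℝ) → ℝ} (hμ : IsIdemMeasure μ) (hν : IsIdemMeasure ν)
    (n : ℕ) : (0:ℝ) ∈ {r : ℝ | ∃ φ ∈ nLip X n, r = |μ φ - ν φ|} :=
  ⟨0, zero_mem_nLip n, by rw [idem_zero hμ, idem_zero hν]; simp⟩

lemma isCompact_Kset (n : ℕ) (x₀ : X) : IsCompact (Kset X n x₀) := by
  set B := (n : ℝ) * Metric.diam (Set.univ : Set X) with hBdef
  apply ArzelaAscoli.isCompact_of_equicontinuous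
  · -- compactness of the image in the product topology
    have himg : ContinuousMap.toFun '' (Kset X n x₀) =
        {f : X → ℝ | (∀ x y, |f x - f y| ≤ (n:ℝ) * dist x y) ∧ f x₀ = 0} := by
      ext f
      constructor
      · rintro ⟨φ, hφ, rfl⟩
        exact ⟨hφ.1, hφ.2⟩
      · rintro ⟨h1, h2⟩
        have hcont : Continuous f := by
          apply LipschitzWith.continuous (K := (n : NNReal))
          apply LipschitzWith.of_dist_le_mul
          intro x y
          rw [Real.dist_eq]
          simpa using h1 x y
        exact ⟨⟨f, hcont⟩, ⟨h1, h2⟩, rfl⟩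
    rw [himg]
    have hclosed : IsClosed {f : X → ℝ | (∀ x y, |f x - f y| ≤ (n:ℝ) * dist x y) ∧ f x₀ = 0} := by
      apply IsClosed.inter
      · show IsClosed {f : X → ℝ | ∀ x y, |f x - f y| ≤ (n:ℝ) * dist x y}
        have : {f : X → ℝ | ∀ x y, |f x - f y| ≤ (n:ℝ) * dist x y} =
            ⋂ (x : X), ⋂ (y : X), {f : X → ℝ | |f x - f y| ≤ (n:ℝ) * dist x y} := by
          ext f; simp
        rw [this]
        refine isClosed_iInter fun x => isClosed_iInter fun y => ?_
        exact isClosed_le (by continuity) continuous_const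
      · show IsClosed {f : X → ℝ | f x₀ = 0}
        exact isClosed_eq (continuous_apply x₀) continuous_const
    apply IsCompact.of_isClosed_subset (isCompact_univ_pi fun _ => isCompact_Icc
      (a := -B) (b := B)) hclosed
    rintro f ⟨h1, h2⟩
    intro x _
    constructor
    · have : |f x - f x₀| ≤ (n:ℝ) * dist x x₀ := h1 x x₀
      have hd : dist x x₀ ≤ Metric.diam (Set.univ : Set X) :=
        Metric.dist_le_diam_of_mem isCompact_univ.isBounded trivial trivial
      have := abs_le.mp this
      have hnn : (n:ℝ) * dist x x₀ ≤ B := by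
        rw [hBdef]; exact mul_le_mul_of_nonneg_left hd (Nat.cast_nonneg n)
      rw [h2] at this
      simp only [sub_zero] at this
      linarith [this.1]
    · have : |f x - f x₀| ≤ (n:ℝ) * dist x x₀ := h1 x x₀
      have hd : dist x x₀ ≤ Metric.diam (Set.univ : Set X) :=
        Metric.dist_le_diam_of_mem isCompact_univ.isBounded trivial trivial
      have := abs_le.mp this
      have hnn : (n:ℝ) * dist x x₀ ≤ B := by
        rw [hBdef]; exact mul_le_mul_of_nonneg_left hd (Nat.cast_nonneg n)
      rw [h2] at this
      simp only [sub_zero] at this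
      linarith [this.2]
  · -- equicontinuity
    apply Metric.equicontinuous_of_continuity_modulus (fun r => (n:ℝ) * r)
    · have : Continuous (fun r : ℝ => (n:ℝ) * r) := by continuity
      simpa using this.tendsto' 0 0 (by simp)
    · intro x y φ
      rw [Real.dist_eq]
      exact φ.2.1 x y

end Aux

section Main

variable {X : Type*} [MetricSpace X] [CompactSpace X]

lemma dHat_approx (n : ℕ) (x₀ : X) {ε : ℝ} (hε : 0 < ε) :
    ∃ (F : Finset C(X,ℝ)) (hF : F.Nonempty), (↑F : Set C(X,ℝ)) ⊆ nLip X n ∧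
      ∀ (μ ν : C(X,ℝ) → ℝ), IsIdemMeasure μ → IsIdemMeasure ν →
        |dHat n μ ν - F.sup' hF (fun ψ => |μ ψ - ν ψ|)| ≤ 2 * ε := by
  have hK := isCompact_Kset (X := X) n x₀
  obtain ⟨t, htK, htfin, hcov⟩ := hK.elim_finite_subcover_image
    (b := Kset X n x₀) (c := fun φ => Metric.ball φ ε)
    (fun φ _ => Metric.isOpen_ball)
    (fun φ hφ => Set.mem_biUnion hφ (Metric.mem_ball_self hε))
  have h0 : (0 : C(X,ℝ)) ∈ ⋃ φ ∈ t, Metric.ball φ ε := hcov (zero_mem_Kset n x₀)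
  have htne : t.Nonempty := by
    rcases Set.mem_iUnion₂.mp h0 with ⟨φ, hφ, -⟩
    exact ⟨φ, hφ⟩
  refine ⟨htfin.toFinset, by simpa using htne, ?_, ?_⟩
  · intro ψ hψ
    have : ψ ∈ t := by simpa using hψ
    exact (htK this).1
  · intro μ ν hμ hν
    set g := htfin.toFinset.sup' (by simpa using htne) (fun ψ => |μ ψ - ν ψ|) with hg
    have hbdd := dHat_bddAbove hμ hν n x₀
    have hgle : g ≤ dHat n μ ν := by
      apply Finset.sup'_le
      intro ψ hψ
      have hψt : ψ ∈ t := by simpa using hψ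
      exact le_csSup hbdd ⟨ψ, (htK hψt).1, rfl⟩
    have hgnonneg : 0 ≤ g := by
      obtain ⟨ψ, hψ⟩ := htne
      have : ψ ∈ htfin.toFinset := by simpa using hψ
      exact le_trans (abs_nonneg (μ ψ - ν ψ)) (Finset.le_sup' (fun ψ => |μ ψ - ν ψ|) this)
    have hle : dHat n μ ν ≤ g + 2 * ε := by
      apply Real.sSup_le
      · rintro r ⟨φ, hφ, rfl⟩
        obtain ⟨ψ, hψK, heq⟩ := shift_to_Kset hμ hν x₀ hφ
        rw [heq]
        obtain ⟨χ, hχt, hχball⟩ := Set.mem_iUnion₂.mp (hcov hψK)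
        have hdist : ‖ψ - χ‖ < ε := by
          rw [← dist_eq_norm]; exact hχball
        have hμc : |μ ψ - μ χ| ≤ ε := le_of_lt (lt_of_le_of_lt (idem_lip hμ ψ χ) hdist)
        have hνc : |ν ψ - ν χ| ≤ ε := le_of_lt (lt_of_le_of_lt (idem_lip hν ψ χ) hdist)
        have hχF : χ ∈ htfin.toFinset := by simpa using hχt
        have hgχ : |μ χ - ν χ| ≤ g := Finset.le_sup' (fun ψ => |μ ψ - ν ψ|) hχF
        have habs : |μ ψ - ν ψ| ≤ |μ χ - ν χ| + |μ ψ - μ χ| + |ν ψ - ν χ| := by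
          have : μ ψ - ν ψ = (μ χ - ν χ) + (μ ψ - μ χ) - (ν ψ - ν χ) := by ring
          rw [this]
          calc |(μ χ - ν χ) + (μ ψ - μ χ) - (ν ψ - ν χ)|
              ≤ |(μ χ - ν χ) + (μ ψ - μ χ)| + |ν ψ - ν χ| := abs_sub _ _
            _ ≤ |μ χ - ν χ| + |μ ψ - μ χ| + |ν ψ - ν χ| := by
                have := abs_add_le (μ χ - ν χ) (μ ψ - μ χ); linarith
        linarith
      · linarith
    rw [abs_sub_le_iff]
    constructor
    · have : dHat n μ ν - g ≤ 2 * ε := by linarith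
      exact this
    · linarith

lemma dHat_continuous (n : ℕ) (x₀ : X) :
    Continuous (fun p : IdemMeasure X × IdemMeasure X => dHat n p.1.val p.2.val) := by
  apply continuous_of_uniform_approx_of_continuous
  intro u hu
  obtain ⟨ε, hε, hεu⟩ := Metric.mem_uniformity_dist.mp hu
  obtain ⟨F, hF, hFlip, happrox⟩ := dHat_approx (X := X) n x₀ (ε := ε/5) (by linarith)
  refine ⟨fun p : IdemMeasure X × IdemMeasure X =>
    F.sup' hF (fun ψ => |p.1.val ψ - p.2.val ψ|), ?_, ?_⟩
  · apply Continuous.finset_sup'_apply hF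
    intro ψ _
    apply Continuous.abs
    apply Continuous.sub
    · exact (continuous_apply ψ).comp (continuous_subtype_val.comp continuous_fst)
    · exact (continuous_apply ψ).comp (continuous_subtype_val.comp continuous_snd)
  · intro p
    apply hεu
    rw [Real.dist_eq]
    have h := happrox p.1.val p.2.val p.1.2 p.2.2
    linarith

lemma dHat_self (n : ℕ) {μ : C(X,ℝ) → ℝ} (hμ : IsIdemMeasure μ) : dHat n μ μ = 0 := by
  have : {r : ℝ | ∃ φ ∈ nLip X n, r = |μ φ - μ φ|} = {0} := by
    ext r
    constructor
    · rintro ⟨φ, hφ, rfl⟩; simp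
    · rintro rfl; exact ⟨0, zero_mem_nLip n, by simp⟩
  rw [dHat, this, csSup_singleton]

end Main

lemma isEmpty_idemMeasure {X : Type*} [TopologicalSpace X] (hX : IsEmpty X) :
    IsEmpty (IdemMeasure X) := by
  constructor
  rintro ⟨μ, hμ⟩
  have h0 := hμ.1 0
  have h1 := hμ.1 1
  have heq : ContinuousMap.const X (0:ℝ) = ContinuousMap.const X 1 := by
    ext x; exact hX.elim x
  rw [heq] at h0
  linarith


/-- For a compact metric space `(X, d)` and `n ≥ 1`, the function
`d̂ₙ : I(X) × I(X) → ℝ` is continuous in the weak* topology; equivalently, it is sequentially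
continuous, and in particular no sequence converging to `μ` can stay `d̂ₙ`-bounded away from
`μ`. -/
theorem statement1 {X : Type*} [MetricSpace X] [CompactSpace X] (n : ℕ) (hn : 1 ≤ n) :
    Continuous (fun p : IdemMeasure X × IdemMeasure X => dHat n p.1.val p.2.val) ∧
    (∀ (μs νs : ℕ → IdemMeasure X) (μ ν : IdemMeasure X),
      Tendsto μs atTop (𝓝 μ) → Tendsto νs atTop (𝓝 ν) →
      Tendsto (fun i => dHat n (μs i).val (νs i).val) atTop (𝓝 (dHat n μ.val ν.val))) ∧
    (∀ (μs : ℕ → IdemMeasure X) (μ : IdemMeasure X),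
      Tendsto μs atTop (𝓝 μ) →
      ∀ c : ℝ, 0 < c → ¬ (∀ i : ℕ, c ≤ dHat n (μs i).val μ.val)) := by
  by_cases hX : Nonempty X
  · obtain ⟨x₀⟩ := hX
    have hcont := dHat_continuous (X := X) n x₀
    have hseq : ∀ (μs νs : ℕ → IdemMeasure X) (μ ν : IdemMeasure X),
        Tendsto μs atTop (𝓝 μ) → Tendsto νs atTop (𝓝 ν) →
        Tendsto (fun i => dHat n (μs i).val (νs i).val) atTop (𝓝 (dHat n μ.val ν.val)) := by
      intro μs νs μ ν hμ hν
      have hprod : Tendsto (fun i => (μs i, νs i)) atTop (𝓝 (μ, ν)) := hμ.prodMk_nhds hν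
      have h3 := (hcont.tendsto (μ, ν)).comp hprod
      simpa [Function.comp_def] using h3
    refine ⟨hcont, hseq, ?_⟩
    intro μs μ hμ c hc hall
    have htend := hseq μs (fun _ => μ) μ μ hμ tendsto_const_nhds
    rw [dHat_self n μ.2] at htend
    have hge : (0:ℝ) ≥ c := ge_of_tendsto' htend hall
    linarith
  · have hIE : IsEmpty (IdemMeasure X) := isEmpty_idemMeasure (not_nonempty_iff.mp hX)
    refine ⟨?_, ?_, ?_⟩
    · rw [continuous_def]
      intro s _
      have he : (fun p : IdemMeasure X × IdemMeasure X => dHat n p.1.val p.2.val) ⁻¹' s = ∅ :=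
        Set.eq_empty_of_isEmpty _
      rw [he]; exact isOpen_empty
    · intro μs; exact (hIE.false (μs 0)).elim
    · intro μs; exact (hIE.false (μs 0)).elim
end

section
/- Let X be a compact Hausdorff space and μ₀ ∈ I(X). Then the map h : I(X) × [−∞, 0] → I(X) defined by h(μ, λ)(φ) = the real number max(μ(φ), λ + μ₀(φ)) computed in the extended reals (so h(μ, −∞) = μ and h(μ, 0) = μ ⊕ μ₀) is continuous, where I(X) carries the weak* topology and [−∞, 0] ⊆ ℝ ∪ {−∞} carries the order topology. -/
/-- Real-valued version: `φ ↦ max (μ φ) (l + μ₀ φ)` is an idempotent measure for `l ≤ 0`. -/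
lemma isIdemMeasure_max_real {X : Type*} [TopologicalSpace X]
    {μ μ₀ : C(X, ℝ) → ℝ} (hμ : IsIdemMeasure μ) (hμ₀ : IsIdemMeasure μ₀)
    {l : ℝ} (hl : l ≤ 0) :
    IsIdemMeasure (fun φ : C(X, ℝ) => max (μ φ) (l + μ₀ φ)) := by
  obtain ⟨h1, h2, h3⟩ := hμ
  obtain ⟨g1, g2, g3⟩ := hμ₀
  refine ⟨fun c => ?_, fun c φ => ?_, fun φ ψ => ?_⟩
  · show max (μ (ContinuousMap.const X c)) (l + μ₀ (ContinuousMap.const X c)) = c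
    rw [h1, g1]
    exact max_eq_left (by linarith)
  · show max (μ (ContinuousMap.const X c + φ)) (l + μ₀ (ContinuousMap.const X c + φ)) =
        c + max (μ φ) (l + μ₀ φ)
    rw [h2, g2, show l + (c + μ₀ φ) = c + (l + μ₀ φ) by ring, max_add_add_left]
  · show max (μ (φ ⊔ ψ)) (l + μ₀ (φ ⊔ ψ)) =
        max (max (μ φ) (l + μ₀ φ)) (max (μ ψ) (l + μ₀ ψ))
    rw [h3, g3, show l + max (μ₀ φ) (μ₀ ψ) = max (l + μ₀ φ) (l + μ₀ ψ) from
      (max_add_add_left _ _ _).symm, max_max_max_comm]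

/-- For a compact Hausdorff space `X` and `μ₀ ∈ I(X)`, the map
`h : I(X) × [−∞, 0] → I(X)`, `h(μ, λ)(φ) = max(μ(φ), λ + μ₀(φ))` (computed in the extended
reals `ℝ ∪ {−∞}`, with `−∞ + r = −∞`), takes values in `I(X)` and is continuous, where `I(X)`
carries the weak* topology and `[−∞, 0] ⊆ ℝ ∪ {−∞}` the order topology. -/
theorem statement8 {X : Type*} [TopologicalSpace X] [CompactSpace X] [T2Space X]
    (μ₀ : C(X, ℝ) → ℝ) (hμ₀ : IsIdemMeasure μ₀) :
    (∀ (μ : IdemMeasure X) (lam : Set.Iic (0 : EReal)),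
      IsIdemMeasure (fun φ : C(X, ℝ) =>
        ((μ.val φ : EReal) ⊔ ((lam : EReal) + (μ₀ φ : EReal))).toReal)) ∧
    Continuous (fun p : IdemMeasure X × Set.Iic (0 : EReal) =>
      (fun φ : C(X, ℝ) =>
        ((p.1.val φ : EReal) ⊔ ((p.2 : EReal) + (μ₀ φ : EReal))).toReal : C(X, ℝ) → ℝ)) := by
  constructor
  · rintro μ ⟨lam, hlam⟩
    induction lam with
    | bot =>
      have : (fun φ : C(X, ℝ) =>
          ((μ.val φ : EReal) ⊔ ((⊥ : EReal) + (μ₀ φ : EReal))).toReal) = μ.val := by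
        funext φ
        simp
      rw [this]
      exact μ.2
    | coe l =>
      have hl : l ≤ 0 := by
        rw [Set.mem_Iic] at hlam
        exact_mod_cast hlam
      have : (fun φ : C(X, ℝ) =>
          ((μ.val φ : EReal) ⊔ ((l : EReal) + (μ₀ φ : EReal))).toReal) =
          fun φ : C(X, ℝ) => max (μ.val φ) (l + μ₀ φ) := by
        funext φ
        rw [← EReal.coe_add, ← EReal.coe_strictMono.monotone.map_max, EReal.toReal_coe]
      rw [this]
      exact isIdemMeasure_max_real μ.2 hμ₀ hl
    | top => exact absurd hlam (by simp)
  · apply continuous_pi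
    intro φ
    rw [continuous_iff_continuousAt]
    intro p
    set c : EReal := (μ₀ φ : EReal) with hc
    have hfst : ContinuousAt (fun p : IdemMeasure X × Set.Iic (0 : EReal) =>
        ((p.1.val φ : ℝ) : EReal)) p := by
      apply Continuous.continuousAt
      exact continuous_coe_real_ereal.comp
        ((continuous_apply φ).comp (continuous_subtype_val.comp continuous_fst))
    have hadd : ContinuousAt (fun p : IdemMeasure X × Set.Iic (0 : EReal) =>
        ((p.2 : EReal) + c)) p := by
      have h1 : ContinuousAt (fun p : IdemMeasure X × Set.Iic (0 : EReal) =>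
          (((p.2 : EReal), c) : EReal × EReal)) p :=
        ((continuous_subtype_val.comp continuous_snd).prodMk continuous_const).continuousAt
      have h2 : ContinuousAt (fun q : EReal × EReal => q.1 + q.2) ((p.2 : EReal), c) := by
        apply EReal.continuousAt_add
        · left
          exact ne_top_of_le_ne_top (by simp) p.2.2
        · right
          exact EReal.coe_ne_top _
      exact Filter.Tendsto.comp h2 h1
    have hsup : ContinuousAt (fun p : IdemMeasure X × Set.Iic (0 : EReal) =>
        ((p.1.val φ : EReal) ⊔ ((p.2 : EReal) + c))) p := hfst.max hadd
    have hne_bot : ((p.1.val φ : EReal) ⊔ ((p.2 : EReal) + c)) ≠ ⊥ := by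
      refine ne_bot_of_le_ne_bot (EReal.coe_ne_bot _) le_sup_left
    have hne_top : ((p.1.val φ : EReal) ⊔ ((p.2 : EReal) + c)) ≠ ⊤ := by
      have h1 : ((p.2 : EReal) + c) ≤ c := by
        calc ((p.2 : EReal) + c) ≤ 0 + c := add_le_add_left p.2.2 c
        _ = c := zero_add c
      refine ne_top_of_le_ne_top ?_ (sup_le le_sup_left (h1.trans le_sup_right))
      rw [hc]
      exact (max_lt (EReal.coe_lt_top _) (EReal.coe_lt_top _)).ne
    exact (EReal.tendsto_toReal hne_top hne_bot).comp hsup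
end

section
/- Let X be a compact metrizable space and let A be a nonempty closed max-plus convex subset of I(X), i.e., for all μ, ν ∈ A and all α, β ∈ ℝ ∪ {−∞} with max(α, β) = 0, the idempotent measure α⊙μ ⊕ β⊙ν belongs to A. Then A, with the subspace topology inherited from the weak* topology on I(X), is contractible. -/
/-- The max-plus combination `α⊙μ ⊕ β⊙ν`: the functional
`φ ↦ max(α + μ(φ), β + ν(φ))`, computed in the extended reals `ℝ ∪ {−∞}` (with the
convention `−∞ + r = −∞`) and read off as a real number (which it is when `max(α, β) = 0`). -/
noncomputable def maxPlusComb {X : Type*} [TopologicalSpace X] (α β : EReal)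
    (μ ν : C(X, ℝ) → ℝ) : C(X, ℝ) → ℝ :=
  fun φ => ((α + (μ φ : EReal)) ⊔ (β + (ν φ : EReal))).toReal

open Real EReal

/-- the coefficient path -/
noncomputable def pcoef (t : ℝ) : EReal :=
  if t ≤ 0 then ⊥ else ((min 0 (Real.log (2*t)) : ℝ) : EReal)

lemma pcoef_nonpos (t : ℝ) : pcoef t ≤ 0 := by
  unfold pcoef; split
  · exact bot_le
  · exact_mod_cast min_le_left _ _

lemma pcoef_of_nonpos {t : ℝ} (h : t ≤ 0) : pcoef t = ⊥ := if_pos h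

lemma pcoef_of_half_le {t : ℝ} (h : 1/2 ≤ t) : pcoef t = 0 := by
  have h0 : ¬ t ≤ 0 := by linarith
  have hlog : (0:ℝ) ≤ Real.log (2*t) := Real.log_nonneg (by linarith)
  unfold pcoef
  rw [if_neg h0, min_eq_left hlog]
  exact EReal.coe_zero

lemma pcoef_max {t : ℝ} (h0 : 0 ≤ t) (h1 : t ≤ 1) : pcoef (1-t) ⊔ pcoef t = 0 := by
  rcases le_total t (1/2) with h | h
  · rw [pcoef_of_half_le (by linarith : 1/2 ≤ 1 - t)]
    exact sup_eq_left.mpr (pcoef_nonpos t)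
  · rw [pcoef_of_half_le h]
    exact sup_eq_right.mpr (pcoef_nonpos _)

lemma ereal_coe_max (a b : ℝ) : ((max a b : ℝ) : EReal) = (a:EReal) ⊔ (b:EReal) := by
  rcases le_total a b with h | h
  · rw [max_eq_right h, sup_eq_right.mpr (by exact_mod_cast h)]
  · rw [max_eq_left h, sup_eq_left.mpr (by exact_mod_cast h)]

lemma comb_ne_top {α β : EReal} (hα : α ≤ 0) (hβ : β ≤ 0) (x y : ℝ) :
    (α + (x:EReal)) ⊔ (β + (y:EReal)) ≠ ⊤ := by
  have h1 : α + (x:EReal) ≤ x := by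
    calc α + (x:EReal) ≤ 0 + x := add_le_add_left hα _
    _ = x := by simp
  have h2 : β + (y:EReal) ≤ y := by
    calc β + (y:EReal) ≤ 0 + y := add_le_add_left hβ _
    _ = y := by simp
  intro h
  have hle := sup_le_sup h1 h2
  rw [h, top_le_iff] at hle
  rcases max_eq_iff.mp hle with ⟨h', _⟩ | ⟨h', _⟩ <;> simp at h' 

lemma comb_ne_bot {α β : EReal} (hmax : α ⊔ β = 0) (x y : ℝ) :
    (α + (x:EReal)) ⊔ (β + (y:EReal)) ≠ ⊥ := by
  rcases max_eq_iff.mp hmax with ⟨h', _⟩ | ⟨h', _⟩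
  · have : (x:EReal) ≤ (α + x) ⊔ (β + y) := by
      rw [h']; simpa using le_sup_left (a := (0:EReal) + x) (b := β + y)
    exact fun hb => by simp [hb] at this
  · have : (y:EReal) ≤ (α + x) ⊔ (β + y) := by
      rw [h']; simpa using le_sup_right (a := α + x) (b := (0:EReal) + y)
    exact fun hb => by simp [hb] at this

lemma comb_coe {α β : EReal} (hα : α ≤ 0) (hmax : α ⊔ β = 0) (x y : ℝ) :
    ((((α + (x:EReal)) ⊔ (β + (y:EReal))).toReal : ℝ) : EReal)
      = (α + (x:EReal)) ⊔ (β + (y:EReal)) := by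
  have hβ : β ≤ 0 := hmax ▸ le_sup_right
  exact EReal.coe_toReal (comb_ne_top hα hβ x y) (comb_ne_bot hmax x y)

lemma isIdem_comb {X : Type*} [TopologicalSpace X] {α β : EReal} (hα : α ≤ 0)
    (hmax : α ⊔ β = 0) {μ ν : C(X, ℝ) → ℝ}
    (hμ : IsIdemMeasure μ) (hν : IsIdemMeasure ν) :
    IsIdemMeasure (maxPlusComb α β μ ν) := by
  have hβ : β ≤ 0 := hmax ▸ le_sup_right
  obtain ⟨hμ1, hμ2, hμ3⟩ := hμ
  obtain ⟨hν1, hν2, hν3⟩ := hν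
  refine ⟨?_, ?_, ?_⟩
  · intro c
    simp only [maxPlusComb, hμ1, hν1]
    have : (α + (c:EReal)) ⊔ (β + (c:EReal)) = ((α ⊔ β) + (c:EReal)) :=
      (max_add_add_right α β (c:EReal))
    rw [this, hmax, zero_add, EReal.toReal_coe]
  · intro c φ
    simp only [maxPlusComb, hμ2, hν2]
    have e1 : (α + ((c + μ φ : ℝ):EReal)) = (c:EReal) + (α + (μ φ : EReal)) := by
      rw [EReal.coe_add, ← add_assoc, add_comm α (c:EReal), add_assoc]
    have e2 : (β + ((c + ν φ : ℝ):EReal)) = (c:EReal) + (β + (ν φ : EReal)) := by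
      rw [EReal.coe_add, ← add_assoc, add_comm β (c:EReal), add_assoc]
    rw [e1, e2, max_add_add_left]
    conv_lhs => rw [← comb_coe hα hmax (μ φ) (ν φ), ← EReal.coe_add, EReal.toReal_coe]
  · intro φ ψ
    simp only [maxPlusComb, hμ3, hν3]
    have e1 : (α + ((max (μ φ) (μ ψ) : ℝ):EReal)) = (α + (μ φ:EReal)) ⊔ (α + (μ ψ:EReal)) := by
      rw [ereal_coe_max, max_add_add_left]
    have e2 : (β + ((max (ν φ) (ν ψ) : ℝ):EReal)) = (β + (ν φ:EReal)) ⊔ (β + (ν ψ:EReal)) := by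
      rw [ereal_coe_max, max_add_add_left]
    rw [e1, e2, sup_sup_sup_comm]
    conv_lhs => rw [← comb_coe hα hmax (μ φ) (ν φ), ← comb_coe hα hmax (μ ψ) (ν ψ),
      ← ereal_coe_max, EReal.toReal_coe]

/-- The real-valued two-parameter function underlying the homotopy. -/
noncomputable def Gfun (y : ℝ) (t x : ℝ) : ℝ :=
  ((pcoef (1-t) + (x:EReal)) ⊔ (pcoef t + (y:EReal))).toReal

lemma Gfun_of_nonpos {y t : ℝ} (h : t ≤ 0) (x : ℝ) : Gfun y t x = x := by
  rw [Gfun, pcoef_of_nonpos h, pcoef_of_half_le (by linarith), EReal.bot_add, zero_add]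
  simp

lemma Gfun_of_one_le {y t : ℝ} (h : 1 ≤ t) (x : ℝ) : Gfun y t x = y := by
  rw [Gfun, pcoef_of_nonpos (by linarith : 1 - t ≤ 0), pcoef_of_half_le (by linarith),
    EReal.bot_add, zero_add]
  simp

lemma Gfun_of_mem {y t : ℝ} (h0 : 0 < t) (h1 : t < 1) (x : ℝ) :
    Gfun y t x = max (min 0 (Real.log (2*(1-t))) + x) (min 0 (Real.log (2*t)) + y) := by
  rw [Gfun, pcoef, pcoef, if_neg (by linarith), if_neg (by linarith)]
  rw [← EReal.coe_add, ← EReal.coe_add, ← ereal_coe_max, EReal.toReal_coe]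

lemma Gfun_eq_x {y t x : ℝ} (ht : 0 < t) (ht2 : t ≤ 1/2) (hxy : Real.log (2*t) + y ≤ x) :
    Gfun y t x = x := by
  rw [Gfun, pcoef_of_half_le (by linarith : 1/2 ≤ 1 - t), pcoef, if_neg (by linarith),
    zero_add, ← EReal.coe_add]
  have : ((min 0 (Real.log (2*t)) + y : ℝ) : EReal) ≤ (x:EReal) := by
    exact_mod_cast le_trans (by nlinarith [min_le_right (0:ℝ) (Real.log (2*t))]) hxy
  rw [sup_eq_left.mpr this, EReal.toReal_coe]

lemma Gfun_eq_y {y t x : ℝ} (ht : 1/2 ≤ t) (ht2 : t < 1) (hxy : Real.log (2*(1-t)) + x ≤ y) :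
    Gfun y t x = y := by
  rw [Gfun, pcoef_of_half_le ht, pcoef, if_neg (by linarith), zero_add, ← EReal.coe_add]
  have : ((min 0 (Real.log (2*(1-t))) + x : ℝ) : EReal) ≤ (y:EReal) := by
    exact_mod_cast le_trans (by nlinarith [min_le_right (0:ℝ) (Real.log (2*(1-t)))]) hxy
  rw [sup_eq_right.mpr this, EReal.toReal_coe]

lemma maxPlusComb_pcoef_zero {X : Type*} [TopologicalSpace X] (μ ν : C(X, ℝ) → ℝ) :
    maxPlusComb (pcoef 1) (pcoef 0) μ ν = μ := by
  funext φ
  rw [maxPlusComb, pcoef_of_nonpos le_rfl, pcoef_of_half_le (by norm_num : (1:ℝ)/2 ≤ 1),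
    EReal.bot_add, zero_add]
  simp

lemma maxPlusComb_pcoef_one {X : Type*} [TopologicalSpace X] (μ ν : C(X, ℝ) → ℝ) :
    maxPlusComb (pcoef 0) (pcoef 1) μ ν = ν := by
  funext φ
  rw [maxPlusComb, pcoef_of_nonpos le_rfl, pcoef_of_half_le (by norm_num : (1:ℝ)/2 ≤ 1),
    EReal.bot_add, zero_add]
  simp

lemma Gfun_continuous (y : ℝ) : Continuous (fun p : ℝ × ℝ => Gfun y p.1 p.2) := by
  rw [continuous_iff_continuousAt]
  rintro ⟨t₀, x₀⟩
  rcases le_or_gt t₀ 0 with ht | ht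
  · -- near the left end, G = x
    set δ : ℝ := min (1/2) (Real.exp (x₀ - 1 - y) / 2) with hδdef
    have hδ0 : 0 < δ := lt_min (by norm_num) (by positivity)
    have hU : Set.Iio δ ×ˢ Set.Ioo (x₀-1) (x₀+1) ∈ nhds (t₀, x₀) :=
      (isOpen_Iio.prod isOpen_Ioo).mem_nhds ⟨lt_of_le_of_lt ht hδ0, by constructor <;> linarith⟩
    have hev : ∀ᶠ p : ℝ × ℝ in nhds (t₀, x₀), Gfun y p.1 p.2 = p.2 := by
      filter_upwards [hU] with p hp
      obtain ⟨hp1, hp2⟩ := hp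
      rcases le_or_gt p.1 0 with h | h
      · exact Gfun_of_nonpos h _
      · refine Gfun_eq_x h (le_of_lt (lt_of_lt_of_le hp1 (min_le_left _ _))) ?_
        have h2 : 2 * p.1 < Real.exp (x₀ - 1 - y) := by
          have : p.1 < Real.exp (x₀ - 1 - y) / 2 := lt_of_lt_of_le hp1 (min_le_right _ _)
          linarith
        have := Real.log_lt_log (by linarith) h2
        rw [Real.log_exp] at this
        have hx : x₀ - 1 < p.2 := hp2.1
        linarith
    exact continuousAt_snd.congr (hev.mono fun p hp => hp.symm)
  rcases le_or_gt 1 t₀ with ht1 | ht1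
  · -- near the right end, G = y
    set δ : ℝ := min (1/2) (Real.exp (y - 1 - x₀) / 2) with hδdef
    have hδ0 : 0 < δ := lt_min (by norm_num) (by positivity)
    have hU : Set.Ioi (1-δ) ×ˢ Set.Ioo (x₀-1) (x₀+1) ∈ nhds (t₀, x₀) :=
      (isOpen_Ioi.prod isOpen_Ioo).mem_nhds ⟨by simp only [Set.mem_Ioi]; linarith,
        by constructor <;> linarith⟩
    have hev : ∀ᶠ p : ℝ × ℝ in nhds (t₀, x₀), Gfun y p.1 p.2 = y := by
      filter_upwards [hU] with p hp
      obtain ⟨hp1, hp2⟩ := hp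
      simp only [Set.mem_Ioi] at hp1
      rcases le_or_gt 1 p.1 with h | h
      · exact Gfun_of_one_le h _
      · have hδhalf : δ ≤ 1/2 := min_le_left _ _
        refine Gfun_eq_y (by linarith) h ?_
        have h2 : 2 * (1 - p.1) < Real.exp (y - 1 - x₀) := by
          have hd : 1 - p.1 < δ := by linarith
          have : δ ≤ Real.exp (y - 1 - x₀) / 2 := min_le_right _ _
          linarith
        have := Real.log_lt_log (by linarith) h2
        rw [Real.log_exp] at this
        have hx : p.2 < x₀ + 1 := hp2.2
        linarith
    exact continuousAt_const.congr (hev.mono fun p hp => hp.symm)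
  · -- interior
    have hlog1 : ContinuousAt (fun p : ℝ × ℝ => Real.log (2*(1-p.1))) (t₀, x₀) :=
      (Real.continuousAt_log (by nlinarith)).comp (by fun_prop)
    have hlog2 : ContinuousAt (fun p : ℝ × ℝ => Real.log (2*p.1)) (t₀, x₀) :=
      (Real.continuousAt_log (by nlinarith)).comp (by fun_prop)
    have hF : ContinuousAt (fun p : ℝ × ℝ =>
        max (min 0 (Real.log (2*(1-p.1))) + p.2) (min 0 (Real.log (2*p.1)) + y)) (t₀, x₀) :=
      ((continuousAt_const.min hlog1).add continuousAt_snd).max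
        ((continuousAt_const.min hlog2).add continuousAt_const)
    have hU : Set.Ioo (0:ℝ) 1 ×ˢ (Set.univ : Set ℝ) ∈ nhds (t₀, x₀) :=
      (isOpen_Ioo.prod isOpen_univ).mem_nhds ⟨⟨ht, ht1⟩, trivial⟩
    have hev : ∀ᶠ p : ℝ × ℝ in nhds (t₀, x₀), Gfun y p.1 p.2 =
        max (min 0 (Real.log (2*(1-p.1))) + p.2) (min 0 (Real.log (2*p.1)) + y) := by
      filter_upwards [hU] with p hp
      exact Gfun_of_mem hp.1.1 hp.1.2 _
    exact hF.congr (hev.mono fun p hp => hp.symm)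

/-- Let `X` be a compact metrizable space and `A` a nonempty closed
max-plus convex subset of `I(X)` (closed under all combinations `α⊙μ ⊕ β⊙ν` with
`max(α, β) = 0`). Then `A`, with the subspace topology inherited from the weak* topology,
is contractible. -/
theorem statement9 {X : Type*} [TopologicalSpace X] [CompactSpace X]
    [TopologicalSpace.MetrizableSpace X]
    (A : Set (IdemMeasure X)) (hne : A.Nonempty) (hcl : IsClosed A)
    (hconv : ∀ μ ∈ A, ∀ ν ∈ A, ∀ α β : EReal, α ⊔ β = 0 →
      ∀ τ : IdemMeasure X, τ.val = maxPlusComb α β μ.val ν.val → τ ∈ A) :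
    ContractibleSpace A := by
  obtain ⟨ν₀, hν₀⟩ := hne
  -- the homotopy map
  have hmaxt : ∀ t : unitInterval, pcoef (1 - (t:ℝ)) ⊔ pcoef (t:ℝ) = 0 :=
    fun t => pcoef_max t.2.1 t.2.2
  let K : unitInterval × A → A := fun q =>
    ⟨⟨maxPlusComb (pcoef (1 - (q.1:ℝ))) (pcoef (q.1:ℝ)) q.2.1.1 ν₀.1,
      isIdem_comb ((hmaxt q.1) ▸ le_sup_left) (hmaxt q.1) q.2.1.2 ν₀.2⟩,
      hconv q.2.1 q.2.2 ν₀ hν₀ _ _ (hmaxt q.1) _ rfl⟩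
  have hKcont : Continuous K := by
    apply Continuous.subtype_mk
    apply Continuous.subtype_mk
    apply continuous_pi
    intro φ
    have : (fun q : unitInterval × A =>
        maxPlusComb (pcoef (1 - (q.1:ℝ))) (pcoef (q.1:ℝ)) q.2.1.1 ν₀.1 φ)
        = (fun p : ℝ × ℝ => Gfun (ν₀.1 φ) p.1 p.2) ∘
          (fun q : unitInterval × A => ((q.1:ℝ), q.2.1.1 φ)) := rfl
    rw [this]
    exact (Gfun_continuous _).comp
      ((continuous_subtype_val.comp continuous_fst).prodMk
        ((continuous_apply φ).comp
          (continuous_subtype_val.comp (continuous_subtype_val.comp continuous_snd))))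
  rw [contractible_iff_id_nullhomotopic]
  refine ⟨⟨ν₀, hν₀⟩, ⟨?_⟩⟩
  exact
    { toContinuousMap := ⟨K, hKcont⟩
      map_zero_left := fun σ => by
        apply Subtype.ext; apply Subtype.ext
        show maxPlusComb (pcoef (1 - ((0:unitInterval):ℝ))) (pcoef ((0:unitInterval):ℝ))
          σ.1.1 ν₀.1 = σ.1.1
        rw [show ((0:unitInterval):ℝ) = 0 from rfl, show (1 - (0:ℝ)) = 1 by ring]
        exact maxPlusComb_pcoef_zero _ _
      map_one_left := fun σ => by
        apply Subtype.ext; apply Subtype.ext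
        show maxPlusComb (pcoef (1 - ((1:unitInterval):ℝ))) (pcoef ((1:unitInterval):ℝ))
          σ.1.1 ν₀.1 = ν₀.1
        rw [show ((1:unitInterval):ℝ) = 1 from rfl, show (1 - (1:ℝ)) = 0 by ring]
        exact maxPlusComb_pcoef_one _ _ }
end
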